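/- Let R > 0, ν > 1, and let l₁, l₂ > 0 with l₁ + l₂ = πR; set α₁ := sin(l₁/(2R)), α₂ := sin(l₂/(2R)), and h₊(x) := (1/ν)( −sin²[x/(2R)] + cos[x/(2R)]√(ν² − sin²[x/(2R)]) ). Then ∫₀^{l₁} ( h₊(σ) − h₊(σ + l₂) ) dσ = H(α₁,ν) + H(α₂,ν) − H(1,ν) + (R/ν)·sin(l₁/R), where H(α,ν) := R( (α/ν)√(ν² − α²) + ν arcsin(α/ν) ). -/

import Mathlib

open Real intervalIntegral

/-- `h₊(x) = (1/ν)(−sin²[x/(2R)] + cos[x/(2R)] √(ν² − sin²[x/(2R)]))`. -/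
noncomputable def hPlus (R ν x : ℝ) : ℝ :=
  (1 / ν) * (-(sin (x / (2 * R))) ^ 2
    + cos (x / (2 * R)) * Real.sqrt (ν ^ 2 - (sin (x / (2 * R))) ^ 2))

/-- `H(α,ν) = R((α/ν)√(ν² − α²) + ν arcsin(α/ν))`. -/
noncomputable def Hfun (R α ν : ℝ) : ℝ :=
  R * ((α / ν) * Real.sqrt (ν ^ 2 - α ^ 2) + ν * arcsin (α / ν))

noncomputable def Fanti (R ν x : ℝ) : ℝ :=
  (1 / ν) * (-x / 2 + (R / 2) * sin (x / R)) + Hfun R (sin (x / (2 * R))) ν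

lemma hPlus_continuous (R ν : ℝ) : Continuous (hPlus R ν) := by
  unfold hPlus; fun_prop

lemma hasDerivAt_Fanti (R ν : ℝ) (hR : 0 < R) (hν : 1 < ν) (x : ℝ) :
    HasDerivAt (Fanti R ν) (hPlus R ν x) x := by
  have hRne : R ≠ 0 := hR.ne'
  have hνpos : 0 < ν := lt_trans one_pos hν
  have hνne : ν ≠ 0 := hνpos.ne'
  set s := sin (x / (2 * R)) with hs_def
  set c := cos (x / (2 * R)) with hc_def
  have hs1 : s ^ 2 ≤ 1 := Real.sin_sq_le_one _
  have hq : 0 < ν ^ 2 - s ^ 2 := by nlinarith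
  have hsq : 0 < Real.sqrt (ν ^ 2 - s ^ 2) := Real.sqrt_pos.mpr hq
  have hu : HasDerivAt (fun y : ℝ => y / (2 * R)) (1 / (2 * R)) x := by
    simpa using (hasDerivAt_id x).div_const (2 * R)
  have hsin : HasDerivAt (fun y => sin (y / (2 * R))) (c * (1 / (2 * R))) x :=
    (Real.hasDerivAt_sin _).comp x hu
  have hpow : HasDerivAt (fun y => sin (y / (2 * R)) ^ 2)
      (2 * s * (c * (1 / (2 * R)))) x := by
    simpa using hsin.fun_pow 2
  have hsub : HasDerivAt (fun y => ν ^ 2 - sin (y / (2 * R)) ^ 2)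
      (-(2 * s * (c * (1 / (2 * R))))) x := hpow.const_sub (ν ^ 2)
  have hsqrt : HasDerivAt (fun y => Real.sqrt (ν ^ 2 - sin (y / (2 * R)) ^ 2))
      (-(2 * s * (c * (1 / (2 * R)))) / (2 * Real.sqrt (ν ^ 2 - s ^ 2))) x :=
    hsub.sqrt hq.ne'
  have habs : |s| ≤ 1 := Real.abs_sin_le_one _
  have hlt : |s / ν| < 1 := by
    rw [abs_div, abs_of_pos hνpos, div_lt_one hνpos]
    calc |s| ≤ 1 := habs
      _ < ν := hν
  have hne1 : s / ν ≠ 1 := by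
    intro h; rw [h] at hlt; simp at hlt
  have hnem1 : s / ν ≠ -1 := by
    intro h; rw [h] at hlt; simp at hlt
  have harc : HasDerivAt (fun y => arcsin (sin (y / (2 * R)) / ν))
      ((1 / Real.sqrt (1 - (s / ν) ^ 2)) * (c * (1 / (2 * R)) / ν)) x :=
    by have harc0 := Real.hasDerivAt_arcsin hnem1 hne1; exact harc0.comp x (hsin.div_const ν)
  have hprod : HasDerivAt
      (fun y => (sin (y / (2 * R)) / ν) * Real.sqrt (ν ^ 2 - sin (y / (2 * R)) ^ 2))
      ((c * (1 / (2 * R)) / ν) * Real.sqrt (ν ^ 2 - s ^ 2)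
        + (s / ν) * (-(2 * s * (c * (1 / (2 * R)))) / (2 * Real.sqrt (ν ^ 2 - s ^ 2)))) x :=
    (hsin.div_const ν).mul hsqrt
  have hHf : HasDerivAt (fun y => Hfun R (sin (y / (2 * R))) ν)
      (R * (((c * (1 / (2 * R)) / ν) * Real.sqrt (ν ^ 2 - s ^ 2)
        + (s / ν) * (-(2 * s * (c * (1 / (2 * R)))) / (2 * Real.sqrt (ν ^ 2 - s ^ 2))))
        + ν * ((1 / Real.sqrt (1 - (s / ν) ^ 2)) * (c * (1 / (2 * R)) / ν)))) x := by
    unfold Hfun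
    exact (hprod.add (harc.const_mul ν)).const_mul R
  have h1 : HasDerivAt (fun y : ℝ => y / R) (1 / R) x := by
    simpa using (hasDerivAt_id x).div_const R
  have h2 : HasDerivAt (fun y => sin (y / R)) (cos (x / R) * (1 / R)) x :=
    (Real.hasDerivAt_sin _).comp x h1
  have h3 : HasDerivAt (fun y : ℝ => -y / 2) (-(1 : ℝ) / 2) x := by
    simpa using (hasDerivAt_id x).neg.div_const 2
  have hlin : HasDerivAt (fun y => (1 / ν) * (-y / 2 + (R / 2) * sin (y / R)))
      ((1 / ν) * (-(1 : ℝ) / 2 + (R / 2) * (cos (x / R) * (1 / R)))) x :=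
    (h3.add (h2.const_mul (R / 2))).const_mul (1 / ν)
  have htot := hlin.add hHf
  have hDeq : (1 / ν) * (-(1 : ℝ) / 2 + (R / 2) * (cos (x / R) * (1 / R)))
      + R * (((c * (1 / (2 * R)) / ν) * Real.sqrt (ν ^ 2 - s ^ 2)
        + (s / ν) * (-(2 * s * (c * (1 / (2 * R)))) / (2 * Real.sqrt (ν ^ 2 - s ^ 2))))
        + ν * ((1 / Real.sqrt (1 - (s / ν) ^ 2)) * (c * (1 / (2 * R)) / ν)))
      = hPlus R ν x := by
    have hcosR : cos (x / R) = 1 - 2 * s ^ 2 := by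
      have hx : x / R = 2 * (x / (2 * R)) := by field_simp
      rw [hx, Real.cos_two_mul]
      have := Real.sin_sq_add_cos_sq (x / (2 * R))
      rw [← hs_def, ← hc_def] at this  -- maybe unnecessary
      nlinarith [this]
    have hsrt : Real.sqrt (1 - (s / ν) ^ 2) = Real.sqrt (ν ^ 2 - s ^ 2) / ν := by
      have h : 1 - (s / ν) ^ 2 = (ν ^ 2 - s ^ 2) / ν ^ 2 := by field_simp
      rw [h, Real.sqrt_div hq.le, Real.sqrt_sq hνpos.le]
    set t := Real.sqrt (ν ^ 2 - s ^ 2) with ht_def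
    have ht2 : t ^ 2 = ν ^ 2 - s ^ 2 := Real.sq_sqrt hq.le
    have htne : t ≠ 0 := hsq.ne'
    rw [hsrt, hcosR]
    unfold hPlus
    rw [← hs_def, ← hc_def, ← ht_def]
    field_simp
    linear_combination (-c) * ht2
  unfold Fanti
  exact hDeq ▸ htot

/-- For `ν > 1` and `l₁, l₂ > 0` with `l₁ + l₂ = πR`, with `α₁ = sin(l₁/(2R))`,
`α₂ = sin(l₂/(2R))`, one has
`∫₀^{l₁} (h₊(σ) − h₊(σ + l₂)) dσ = H(α₁,ν) + H(α₂,ν) − H(1,ν) + (R/ν) sin(l₁/R)`. -/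
theorem integral_h_nearest_neighbor (R ν l₁ l₂ : ℝ) (hR : 0 < R) (hν : 1 < ν)
    (hl₁ : 0 < l₁) (hl₂ : 0 < l₂) (hsum : l₁ + l₂ = π * R) :
    ∫ σ in (0 : ℝ)..l₁, (hPlus R ν σ - hPlus R ν (σ + l₂)) =
      Hfun R (sin (l₁ / (2 * R))) ν + Hfun R (sin (l₂ / (2 * R))) ν
        - Hfun R 1 ν + (R / ν) * sin (l₁ / R) := by
  have hRne : R ≠ 0 := hR.ne'
  have hcont := hPlus_continuous R ν
  have hint : ∀ a b : ℝ, (∫ σ in a..b, hPlus R ν σ) = Fanti R ν b - Fanti R ν a := fun a b =>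
    intervalIntegral.integral_eq_sub_of_hasDerivAt (fun y _ => hasDerivAt_Fanti R ν hR hν y)
      (hcont.intervalIntegrable a b)
  have hshift : (∫ σ in (0:ℝ)..l₁, hPlus R ν (σ + l₂))
      = Fanti R ν (l₁ + l₂) - Fanti R ν l₂ := by
    rw [intervalIntegral.integral_comp_add_right (hPlus R ν) l₂, zero_add, hint]
  have hsplit : (∫ σ in (0:ℝ)..l₁, (hPlus R ν σ - hPlus R ν (σ + l₂)))
      = (∫ σ in (0:ℝ)..l₁, hPlus R ν σ) - ∫ σ in (0:ℝ)..l₁, hPlus R ν (σ + l₂) :=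
    intervalIntegral.integral_sub (hcont.intervalIntegrable 0 l₁)
      ((hcont.comp (continuous_id.add continuous_const)).intervalIntegrable 0 l₁)
  rw [hsplit, hint, hshift, hsum]
  have hF0 : Fanti R ν 0 = 0 := by
    simp [Fanti, Hfun]
  have e1 : π * R / R = π := by field_simp
  have e2 : π * R / (2 * R) = π / 2 := by field_simp
  have hFπ : Fanti R ν (π * R) = (1 / ν) * (-(π * R) / 2) + Hfun R 1 ν := by
    rw [Fanti, e1, e2, Real.sin_pi, Real.sin_pi_div_two]; ring
  have hl2R : sin (l₂ / R) = sin (l₁ / R) := by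
    have h : l₂ / R = π - l₁ / R := by
      field_simp
      linarith [hsum]
    rw [h, Real.sin_pi_sub]
  rw [hF0, hFπ]
  unfold Fanti
  rw [hl2R]
  linear_combination (-(1:ℝ) / (2 * ν)) * hsum
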